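/- Let G be a connected simple graph containing a set T of false twins that are not true twins and not simplicial. Then every minimum-size geodetic set of G contains at most four vertices of T. -/
import Mathlib

def simplicialVertex {V : Type*} (G : SimpleGraph V) (v : V) : Prop :=
  ∀ x ∈ G.neighborSet v, ∀ y ∈ G.neighborSet v, x ≠ y → G.Adj x y

def geodeticSet {V : Type*} (G : SimpleGraph V) (S : Set V) : Prop :=
  ∀ u : V, ∃ s₁ ∈ S, ∃ s₂ ∈ S, G.dist s₁ u + G.dist u s₂ = G.dist s₁ s₂

/-- twins are equidistant from everything else (one direction). -/
lemma twin_dist_le {V : Type*} (G : SimpleGraph V) (hG : G.Connected) {a b : V}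
    (h : G.neighborSet a = G.neighborSet b) (u : V) (hua : u ≠ a) :
    G.dist b u ≤ G.dist a u := by
  obtain ⟨p, hp⟩ := hG.exists_walk_length_eq_dist a u
  cases p with
  | nil => exact absurd rfl hua.symm
  | cons hadj q =>
    rename_i c
    have hc : c ∈ G.neighborSet b := h ▸ hadj
    calc G.dist b u ≤ (SimpleGraph.Walk.cons hc q).length := SimpleGraph.dist_le _
    _ = G.dist a u := hp

lemma twin_dist {V : Type*} (G : SimpleGraph V) (hG : G.Connected) {a b : V}
    (h : G.neighborSet a = G.neighborSet b) (u : V) (hua : u ≠ a) (hub : u ≠ b) :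
    G.dist a u = G.dist b u :=
  le_antisymm (twin_dist_le G hG h.symm u hub) (twin_dist_le G hG h u hua)

lemma dist_eq_two' {V : Type*} (G : SimpleGraph V) {a b w : V}
    (hab : a ≠ b) (hnadj : ¬ G.Adj a b) (h1 : G.Adj a w) (h2 : G.Adj w b) :
    G.dist a b = 2 := by
  have hle : G.dist a b ≤ 2 := by
    have := SimpleGraph.dist_le (SimpleGraph.Walk.cons h1 (SimpleGraph.Walk.cons h2 SimpleGraph.Walk.nil))
    simpa using this
  have h0 : G.dist a b ≠ 0 := by
    rw [SimpleGraph.dist_ne_zero_iff_ne_and_reachable]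
    exact ⟨hab, SimpleGraph.Adj.reachable h1 |>.trans (SimpleGraph.Adj.reachable h2)⟩
  have h1' : G.dist a b ≠ 1 := fun h => hnadj (SimpleGraph.dist_eq_one_iff_adj.mp h)
  omega

theorem stmt_9 {V : Type*} [Fintype V] [DecidableEq V]
    (G : SimpleGraph V) (hG : G.Connected)
    (T : Finset V)
    (htwin : ∀ a ∈ T, ∀ b ∈ T, G.neighborSet a = G.neighborSet b)
    (hnadj : ∀ a ∈ T, ∀ b ∈ T, ¬ G.Adj a b)
    (hns : ∀ t ∈ T, ¬ simplicialVertex G t)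
    (S : Finset V) (hS : geodeticSet G ↑S)
    (hmin : ∀ S' : Finset V, geodeticSet G ↑S' → S.card ≤ S'.card) :
    (S ∩ T).card ≤ 4 := by
  by_contra hcard
  push_neg at hcard
  set T' : Finset V := S ∩ T with hT'
  -- pick two distinct elements of T'
  have hcard1 : 1 < T'.card := by omega
  obtain ⟨t₁, t₂, ht₁, ht₂, ht12⟩ := Finset.one_lt_card_iff.mp hcard1
  have ht₁T : t₁ ∈ T := (Finset.mem_inter.mp ht₁).2
  have ht₂T : t₂ ∈ T := (Finset.mem_inter.mp ht₂).2
  -- t₁ is not simplicial: get two nonadjacent neighbors x, y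
  have := hns t₁ ht₁T
  unfold simplicialVertex at this
  push_neg at this
  obtain ⟨x, hx, y, hy, hxy, hxyn⟩ := this
  -- every element of T is adjacent to x and to y
  have hadjx : ∀ t ∈ T, G.Adj t x := fun t ht => by
    have : x ∈ G.neighborSet t := (htwin t ht t₁ ht₁T) ▸ hx
    exact this
  have hadjy : ∀ t ∈ T, G.Adj t y := fun t ht => by
    have : y ∈ G.neighborSet t := (htwin t ht t₁ ht₁T) ▸ hy
    exact this
  have hdistxy : G.dist x y = 2 := dist_eq_two' G hxy hxyn (hadjx t₁ ht₁T).symm (hadjy t₁ ht₁T)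
  -- distance between distinct twins is 2
  have hdtwin : ∀ a ∈ T, ∀ b ∈ T, a ≠ b → G.dist a b = 2 := fun a ha b hb hab =>
    dist_eq_two' G hab (hnadj a ha b hb) (hadjx a ha) (hadjx b hb).symm
  -- the replacement set
  set S' : Finset V := (S \ T') ∪ {t₁, t₂, x, y} with hS'
  have ht₁S' : t₁ ∈ S' := by simp [hS']
  have ht₂S' : t₂ ∈ S' := by simp [hS']
  have hxS' : x ∈ S' := by simp [hS']
  have hyS' : y ∈ S' := by simp [hS']
  -- S' is geodetic
  have hgeo : geodeticSet G ↑S' := by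
    intro u
    by_cases hu : u ∈ S'
    · exact ⟨u, hu, u, hu, by simp [SimpleGraph.dist_self]⟩
    · by_cases huT : u ∈ T'
      · -- u is a twin: it lies between x and y
        have huTT : u ∈ T := (Finset.mem_inter.mp huT).2
        refine ⟨x, hxS', y, hyS', ?_⟩
        rw [hdistxy, SimpleGraph.dist_eq_one_iff_adj.mpr (hadjx u huTT).symm,
          SimpleGraph.dist_eq_one_iff_adj.mpr (hadjy u huTT)]
      · -- u is neither in S' nor a twin in S
        have hut₁ : u ≠ t₁ := fun h => hu (h ▸ ht₁S')
        have hut₂ : u ≠ t₂ := fun h => hu (h ▸ ht₂S')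
        obtain ⟨s₁, hs₁, s₂, hs₂, hd⟩ := hS u
        rw [Finset.mem_coe] at hs₁ hs₂
        have hus : ∀ s ∈ T', u ≠ s := fun s hs h => huT (h ▸ hs)
        by_cases h1 : s₁ ∈ T' <;> by_cases h2 : s₂ ∈ T'
        · -- both endpoints are twins
          by_cases h12 : s₁ = s₂
          · subst h12
            rw [SimpleGraph.dist_self] at hd
            have : G.dist s₁ u = 0 := by omega
            have : u = s₁ := (SimpleGraph.Connected.dist_eq_zero_iff hG).mp
              (by rw [SimpleGraph.dist_comm]; exact this)
            exact absurd this (hus s₁ h1)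
          · have hs₁T : s₁ ∈ T := (Finset.mem_inter.mp h1).2
            have hs₂T : s₂ ∈ T := (Finset.mem_inter.mp h2).2
            rw [hdtwin s₁ hs₁T s₂ hs₂T h12] at hd
            have hp1 : 0 < G.dist s₁ u := hG.pos_dist_of_ne (fun h => hus s₁ h1 h.symm)
            have hp2 : 0 < G.dist u s₂ := hG.pos_dist_of_ne (hus s₂ h2)
            have hd1 : G.dist s₁ u = 1 := by omega
            have hadj1 : G.Adj s₁ u := SimpleGraph.dist_eq_one_iff_adj.mp hd1
            -- u is a common neighbor of the twins; use t₁, t₂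
            have hut : u ∈ G.neighborSet s₁ := hadj1
            refine ⟨t₁, ht₁S', t₂, ht₂S', ?_⟩
            have hu1 : G.Adj t₁ u := by
              have h := hut; rw [← htwin t₁ ht₁T s₁ hs₁T] at h; exact h
            have hu2 : G.Adj t₂ u := by
              have h := hut; rw [← htwin t₂ ht₂T s₁ hs₁T] at h; exact h
            rw [hdtwin t₁ ht₁T t₂ ht₂T ht12, SimpleGraph.dist_eq_one_iff_adj.mpr hu1,
              SimpleGraph.dist_eq_one_iff_adj.mpr hu2.symm]
        · -- s₁ a twin, s₂ not
          have hs₁T : s₁ ∈ T := (Finset.mem_inter.mp h1).2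
          refine ⟨t₁, ht₁S', s₂, Finset.mem_union_left _ (Finset.mem_sdiff.mpr ⟨hs₂, h2⟩), ?_⟩
          have e1 : G.dist s₁ u = G.dist t₁ u :=
            twin_dist G hG (htwin s₁ hs₁T t₁ ht₁T) u (hus s₁ h1) hut₁
          have e2 : G.dist s₁ s₂ = G.dist t₁ s₂ :=
            twin_dist G hG (htwin s₁ hs₁T t₁ ht₁T) s₂
              (fun h => h2 (h ▸ h1)) (fun h => h2 (h ▸ ht₁))
          rw [← e1, ← e2]; exact hd
        · -- s₂ a twin, s₁ not
          have hs₂T : s₂ ∈ T := (Finset.mem_inter.mp h2).2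
          refine ⟨s₁, Finset.mem_union_left _ (Finset.mem_sdiff.mpr ⟨hs₁, h1⟩), t₁, ht₁S', ?_⟩
          have e1 : G.dist u s₂ = G.dist u t₁ := calc
            G.dist u s₂ = G.dist s₂ u := SimpleGraph.dist_comm
            _ = G.dist t₁ u := twin_dist G hG (htwin s₂ hs₂T t₁ ht₁T) u (hus s₂ h2) hut₁
            _ = G.dist u t₁ := SimpleGraph.dist_comm
          have e2 : G.dist s₁ s₂ = G.dist s₁ t₁ := calc
            G.dist s₁ s₂ = G.dist s₂ s₁ := SimpleGraph.dist_comm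
            _ = G.dist t₁ s₁ := twin_dist G hG (htwin s₂ hs₂T t₁ ht₁T) s₁
              (fun h => h1 (h ▸ h2)) (fun h => h1 (h ▸ ht₁))
            _ = G.dist s₁ t₁ := SimpleGraph.dist_comm
          rw [← e1, ← e2]; exact hd
        · exact ⟨s₁, Finset.mem_union_left _ (Finset.mem_sdiff.mpr ⟨hs₁, h1⟩),
            s₂, Finset.mem_union_left _ (Finset.mem_sdiff.mpr ⟨hs₂, h2⟩), hd⟩
  -- cardinality contradiction
  have hc1 : S'.card ≤ (S \ T').card + 4 := by
    calc S'.card ≤ (S \ T').card + ({t₁, t₂, x, y} : Finset V).card :=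
      Finset.card_union_le _ _
    _ ≤ (S \ T').card + 4 := by
      have : ({t₁, t₂, x, y} : Finset V).card ≤ 4 := by
        apply le_trans (Finset.card_insert_le _ _)
        apply Nat.succ_le_succ
        apply le_trans (Finset.card_insert_le _ _)
        apply Nat.succ_le_succ
        apply le_trans (Finset.card_insert_le _ _)
        simp
      omega
  have hsub : T' ⊆ S := Finset.inter_subset_left
  have hcs : (S \ T').card = S.card - T'.card := Finset.card_sdiff_of_subset hsub
  have hTS : T'.card ≤ S.card := Finset.card_le_card hsub
  have := hmin S' hgeo
  omega
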